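/- If σ : ℕ → ℕ is a dyadically linear permutation, then for every natural number n, the cardinality of A_n^σ = { (k,l,m) ∈ [0,2^n)³ : k+l-m ∈ [0,2^n) and σ(k) ⊕ σ(l) ⊕ σ(m) = σ(k+l-m) } is at most 6^n. -/

import Mathlib

/-- `A n τ`: triples `(k,l,m) ∈ [0,2^n)³` with `k+l-m ∈ [0,2^n)` and
`τ(k) ⊕ τ(l) ⊕ τ(m) = τ(k+l-m)`. -/
def A (n : ℕ) (τ : ℕ → ℕ) : Finset (ℕ × ℕ × ℕ) :=
  (Finset.range (2 ^ n) ×ˢ Finset.range (2 ^ n) ×ˢ Finset.range (2 ^ n)).filter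
    (fun p => p.2.2 ≤ p.1 + p.2.1 ∧ p.1 + p.2.1 - p.2.2 < 2 ^ n ∧
      τ p.1 ^^^ τ p.2.1 ^^^ τ p.2.2 = τ (p.1 + p.2.1 - p.2.2))

lemma and_mod_two_iff (a b : ℕ) : (a &&& b) % 2 = 1 ↔ a % 2 = 1 ∧ b % 2 = 1 := by
  rw [Nat.mod_two_eq_one_iff_testBit_zero, Nat.mod_two_eq_one_iff_testBit_zero,
    Nat.mod_two_eq_one_iff_testBit_zero, Nat.testBit_land, Bool.and_eq_true]

lemma add_eq_xor_add (a b : ℕ) : a + b = (a ^^^ b) + 2 * (a &&& b) := by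
  induction a using Nat.strong_induction_on generalizing b with
  | _ a ih =>
    rcases Nat.eq_zero_or_pos a with rfl | ha
    · simp
    have h2 : a / 2 < a := Nat.div_lt_self ha (by norm_num)
    have ihh := ih (a / 2) h2 (b / 2)
    have hx : (a ^^^ b) / 2 = a / 2 ^^^ b / 2 := Nat.xor_div_two
    have hn : (a &&& b) / 2 = a / 2 &&& b / 2 := Nat.and_div_two
    have hxm : (a ^^^ b) % 2 = (a + b) % 2 := Nat.xor_mod_two_eq
    have ham := and_mod_two_iff a b
    omega

lemma step (k l m j : ℕ) (hsum : k + l = m + j) (hxor : k ^^^ l ^^^ m = j) :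
    k / 2 + l / 2 = m / 2 + j / 2 ∧ (k / 2) ^^^ (l / 2) ^^^ (m / 2) = j / 2 ∧
      (k % 2 = l % 2 → m % 2 = k % 2) := by
  have hxleq : k ^^^ l = m ^^^ j := by
    rw [← hxor]
    rw [Nat.xor_comm m]
    rw [Nat.xor_assoc, Nat.xor_assoc, Nat.xor_self, Nat.xor_zero]
  have hand : k &&& l = m &&& j := by
    have h1 := add_eq_xor_add k l
    have h2 := add_eq_xor_add m j
    omega
  have hxd : (k / 2) ^^^ (l / 2) ^^^ (m / 2) = j / 2 := by
    rw [← Nat.xor_div_two, ← Nat.xor_div_two, hxor]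
  have hxm1 : (k ^^^ l) % 2 = (k + l) % 2 := Nat.xor_mod_two_eq
  have hxm2 : (m ^^^ j) % 2 = (m + j) % 2 := Nat.xor_mod_two_eq
  have ha1 := and_mod_two_iff k l
  have ha2 := and_mod_two_iff m j
  refine ⟨?_, hxd, ?_⟩ <;> omega

lemma A_id_card (n : ℕ) : (A n id).card ≤ 6 ^ n := by
  induction n with
  | zero =>
    have hsub : A 0 id ⊆ {(0, 0, 0)} := by
      rintro ⟨a, b, c⟩ hp
      simp only [A, Finset.mem_filter, Finset.mem_product, Finset.mem_range, pow_zero] at hp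
      obtain ⟨⟨h1, h2, h3⟩, -⟩ := hp
      simp only [Finset.mem_singleton, Prod.mk.injEq]
      omega
    simpa using Finset.card_le_card hsub
  | succ n ih =>
    set T : Finset (ℕ × ℕ × ℕ) :=
      {(0,0,0),(0,1,0),(0,1,1),(1,0,0),(1,0,1),(1,1,1)} with hT
    have hmain : (A (n+1) id).card ≤ ((A n id) ×ˢ T).card := by
      apply Finset.card_le_card_of_injOn
        (fun p => ((p.1 / 2, p.2.1 / 2, p.2.2 / 2), (p.1 % 2, p.2.1 % 2, p.2.2 % 2)))
      · rintro ⟨k, l, m⟩ hp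
        simp only [Finset.mem_coe, A, Finset.mem_filter, Finset.mem_product, Finset.mem_range, id_eq] at hp
        obtain ⟨⟨hk, hl, hm⟩, hmle, hjlt, hx⟩ := hp
        set j := k + l - m with hj
        have hsum : k + l = m + j := by omega
        obtain ⟨hs2, hx2, hpar⟩ := step k l m j hsum hx
        have hp2 : 2 ^ (n+1) = 2 * 2 ^ n := by ring
        simp only [Finset.mem_coe, Finset.mem_product, A, Finset.mem_filter, Finset.mem_range, id_eq,
          Finset.mem_insert, Finset.mem_singleton, Prod.mk.injEq, hT]
        refine ⟨⟨⟨by omega, by omega, by omega⟩, by omega, by omega, ?_⟩, by omega⟩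
        have : k / 2 + l / 2 - m / 2 = j / 2 := by omega
        rw [this, hx2]
      · rintro ⟨k, l, m⟩ hp ⟨k', l', m'⟩ hq heq
        simp only [Prod.mk.injEq] at heq ⊢
        omega
    have hcard : ((A n id) ×ˢ T).card = (A n id).card * 6 := by
      rw [Finset.card_product]
      congr 1
    calc (A (n+1) id).card ≤ (A n id).card * 6 := by rw [← hcard]; exact hmain
      _ ≤ 6 ^ n * 6 := by exact Nat.mul_le_mul_right 6 ih
      _ = 6 ^ (n+1) := by ring

theorem stmt_5 (σ : ℕ → ℕ) (hσ : Function.Bijective σ)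
    (hlin : ∀ m n : ℕ, σ (m ^^^ n) = σ m ^^^ σ n) (n : ℕ) :
    (A n σ).card ≤ 6 ^ n := by
  have hA : A n σ = A n id := by
    unfold A
    apply Finset.filter_congr
    rintro ⟨k, l, m⟩ -
    simp only [id_eq]
    constructor
    · rintro ⟨h1, h2, h3⟩
      refine ⟨h1, h2, hσ.1 ?_⟩
      rw [hlin, hlin, h3]
    · rintro ⟨h1, h2, h3⟩
      refine ⟨h1, h2, ?_⟩
      rw [← hlin, ← hlin, h3]
  rw [hA]
  exact A_id_card n
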